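/- Let S be a monoid. The following are equivalent: (a) for all s, t ∈ S, the set R(s,t) is either empty or finitely generated as a right S-subact of S × S; (b) for every s, t ∈ S there exist finitely many pairs (u_1,v_1), …, (u_n,v_n) ∈ R(s,t) (possibly n = 0) such that for every left S-act B satisfying Condition (P) and all a, b ∈ B with s•a = t•b, there exist i ∈ {1,…,n} and d ∈ B with a = u_i•d and b = v_i•d. -/

import Mathlib

universe u

/-- Condition (P) for a left `S`-act `A`. -/
def CondP (S : Type*) [Monoid S] (A : Type*) [MulAction S A] : Prop :=
  ∀ (s t : S) (a b : A), s • a = t • b →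
    ∃ (c : A) (u v : S), a = u • c ∧ b = v • c ∧ s * u = t * v

/-- `R(s,t) = {(u,v) | s*u = t*v}`. -/
def Rset (S : Type*) [Monoid S] (s t : S) : Set (S × S) :=
  {p | s * p.1 = t * p.2}

/-- A subset of `S × S` is finitely generated as a right `S`-subact. -/
def FGpair (S : Type*) [Monoid S] (R : Set (S × S)) : Prop :=
  ∃ F : Finset (S × S), ↑F ⊆ R ∧
    ∀ p ∈ R, ∃ q ∈ F, ∃ w : S, p = (q.1 * w, q.2 * w)

theorem condP_R_fg_iff_replacement (S : Type u) [Monoid S] :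
    (∀ s t : S, Rset S s t = ∅ ∨ FGpair S (Rset S s t)) ↔
      ∀ s t : S, ∃ F : Finset (S × S), ↑F ⊆ Rset S s t ∧
        ∀ (B : Type u) [MulAction S B], CondP S B → ∀ a b : B, s • a = t • b →
          ∃ p ∈ F, ∃ d : B, a = p.1 • d ∧ b = p.2 • d := by
  constructor
  · intro h s t
    rcases h s t with hemp | ⟨F, hF, hgen⟩
    · refine ⟨∅, by simp, fun B _ hB a b hab => ?_⟩
      obtain ⟨c, u, v, _, _, huv⟩ := hB s t a b hab
      exact absurd (Set.eq_empty_iff_forall_notMem.mp hemp (u, v)) (by simpa [Rset] using huv)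
    · refine ⟨F, hF, fun B _ hB a b hab => ?_⟩
      obtain ⟨c, u, v, ha, hb, huv⟩ := hB s t a b hab
      obtain ⟨q, hq, w, hw⟩ := hgen (u, v) huv
      refine ⟨q, hq, w • c, ?_, ?_⟩
      · rw [ha, (Prod.mk.injEq _ _ _ _).mp hw |>.1, mul_smul]
      · rw [hb, (Prod.mk.injEq _ _ _ _).mp hw |>.2, mul_smul]
  · intro h s t
    obtain ⟨F, hF, hrep⟩ := h s t
    refine Or.inr ⟨F, hF, fun p hp => ?_⟩
    have hP : CondP S S := fun s t a b hab =>
      ⟨1, a, b, by simp, by simp, by simpa [smul_eq_mul] using hab⟩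
    obtain ⟨q, hq, d, hd1, hd2⟩ := hrep S hP p.1 p.2 (by simpa [smul_eq_mul, Rset] using hp)
    exact ⟨q, hq, d, by simp [smul_eq_mul] at hd1 hd2; exact Prod.ext hd1 hd2⟩
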